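/- For any probability density function h on the reals with finite Fisher-type integral ∫ (h'(s)/h(s))^4 h(s) ds < ∞, the density h is bounded: there exists a constant C such that h(x) ≤ C for all x. More precisely, ‖h‖_∞ ≤ C(1 + ∫ (h'(s)/h(s))^4 h(s) ds) for a universal constant C. -/

import Mathlib

open MeasureTheory

/-- A probability density `h` with finite Fisher-type integral `∫ (h'/h)⁴ h < ∞` is bounded:
`‖h‖_∞ ≤ C (1 + ∫ (h'/h)⁴ h)` for a universal constant `C`. -/
theorem stmt0 :
    ∃ C : ℝ, 0 < C ∧
      ∀ h : ℝ → ℝ, (∀ x, 0 ≤ h x) → ContDiff ℝ 1 h → (∫ x, h x = 1) →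
        Integrable (fun s => (deriv h s / h s) ^ 4 * h s) →
        ∀ x, h x ≤ C * (1 + ∫ s, (deriv h s / h s) ^ 4 * h s) := by
  refine ⟨1, one_pos, fun h hpos hC1 hint hgint x => ?_⟩
  set g : ℝ → ℝ := fun s => (deriv h s / h s) ^ 4 * h s with hg
  set I : ℝ := ∫ s, g s with hI
  have hdiff : Differentiable ℝ h := hC1.differentiable one_ne_zero
  -- h is integrable
  have hhint : Integrable h := by
    by_contra hcon
    rw [integral_undef hcon] at hint
    norm_num at hint
  -- pointwise bound on |deriv h|
  have hptwise : ∀ s, |deriv h s| ≤ (1/4) * g s + (3/4) * h s := by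
    intro s
    rcases eq_or_lt_of_le (hpos s) with hz | hp
    · have hmin : IsLocalMin h s := by
        refine Filter.Eventually.of_forall fun y => ?_
        rw [← hz]; exact hpos y
      have : deriv h s = 0 := hmin.deriv_eq_zero
      simp only [hg, this, abs_zero, zero_div]
      positivity
    · set t : ℝ := deriv h s / h s with ht
      have hds : deriv h s = t * h s := by
        rw [ht, div_mul_cancel₀ _ hp.ne']
      have habs : |t| ≤ t ^ 4 / 4 + 3 / 4 := by
        rcases abs_cases t with ⟨he, _⟩ | ⟨he, _⟩ <;> nlinarith [sq_nonneg (t - 1),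
          sq_nonneg (t + 1), sq_nonneg t, sq_nonneg (t ^ 2 - 1)]
      calc |deriv h s| = |t| * h s := by rw [hds, abs_mul, abs_of_pos hp]
        _ ≤ (t ^ 4 / 4 + 3 / 4) * h s := by
            exact mul_le_mul_of_nonneg_right habs hp.le
        _ = (1/4) * g s + (3/4) * h s := by simp only [hg]; ring
  -- the bounding function is integrable and nonnegative
  have hbint : Integrable (fun s => (1/4) * g s + (3/4) * h s) :=
    (hgint.const_mul _).add (hhint.const_mul _)
  have hbnn : ∀ s, 0 ≤ (1/4) * g s + (3/4) * h s := fun s =>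
    (abs_nonneg _).trans (hptwise s)
  -- deriv h is integrable
  have hdint : Integrable (deriv h) := by
    refine Integrable.mono' hbint ((hC1.continuous_deriv le_rfl).aestronglyMeasurable) ?_
    exact Filter.Eventually.of_forall fun s => by
      simpa [Real.norm_eq_abs] using hptwise s
  -- h tends to 0 at -∞
  have htend : Filter.Tendsto h Filter.atBot (nhds 0) :=
    tendsto_zero_of_hasDerivAt_of_integrableOn_Iic (a := x)
      (fun s _ => (hdiff s).hasDerivAt) hdint.integrableOn hhint.integrableOn
  -- FTC : ∫_{Iic x} deriv h = h x
  have hftc : ∫ s in Set.Iic x, deriv h s = h x - 0 :=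
    integral_Iic_of_hasDerivAt_of_tendsto' (fun s _ => (hdiff s).hasDerivAt)
      hdint.integrableOn htend
  have hInn : (0:ℝ) ≤ I := integral_nonneg fun s => by
    have := hpos s; positivity
  have key : h x ≤ (1/4) * I + 3/4 := by
    have h1 : h x = ∫ s in Set.Iic x, deriv h s := by rw [hftc]; ring
    have h2 : ∫ s in Set.Iic x, deriv h s ≤
        ∫ s in Set.Iic x, ((1/4) * g s + (3/4) * h s) :=
      integral_mono hdint.integrableOn hbint.integrableOn
        (fun s => (le_abs_self _).trans (hptwise s))
    have h3 : ∫ s in Set.Iic x, ((1/4) * g s + (3/4) * h s) ≤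
        ∫ s, ((1/4) * g s + (3/4) * h s) :=
      setIntegral_le_integral hbint (Filter.Eventually.of_forall hbnn)
    have h4 : ∫ s, ((1/4) * g s + (3/4) * h s) = (1/4) * I + 3/4 := by
      rw [integral_add (hgint.const_mul _) (hhint.const_mul _),
        integral_const_mul, integral_const_mul, hint]
      ring
    linarith
  linarith
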